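/- Let r ≥ 1 and n ≥ 1 be integers, let Y be a nonempty subset of C_r ≀ S_n, let d be the largest integer such that Y is a d-code, and let t be the largest integer such that Y is a t-design. Then r^t · n!/(n−t)! ≤ |Y| ≤ r^{n−d+1} · n!/(d−1)!. Moreover, equality holds in the lower bound if and only if it holds in the upper bound, and this happens if and only if d = n − t + 1. -/

import Mathlib

/-- The monoid hom `Perm (Fin n) →* MulAut (Fin n → G)`, permuting coordinates. -/
def permMulAut (G : Type*) [CommGroup G] (n : ℕ) :
    Equiv.Perm (Fin n) →* MulAut (Fin n → G) where
  toFun π := MulEquiv.arrowCongr π (MulEquiv.refl G)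
  map_one' := by ext f a; rfl
  map_mul' := by intro π σ; ext f a; rfl

/-- The wreath product `G ≀ Sₙ`. -/
abbrev Wr (G : Type*) [CommGroup G] (n : ℕ) :=
  SemidirectProduct (Fin n → G) (Equiv.Perm (Fin n)) (permMulAut G n)

/-- The natural action of `G ≀ Sₙ` on `G × [n]`. -/
def wAct {G : Type*} [CommGroup G] {n : ℕ} (w : Wr G n) (p : G × Fin n) : G × Fin n :=
  (p.1 * w.left (w.right p.2), w.right p.2)

/-- The `i`-th largest part of a multiset of naturals (0-indexed; `0` beyond the last part). -/
def dparts (s : Multiset ℕ) (i : ℕ) : ℕ := ((s.sort (· ≤ ·)).reverse).getD i 0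

/-- `s` is dominated by `t`. -/
def msDom (s t : Multiset ℕ) : Prop :=
  ∀ k, (((s.sort (· ≤ ·)).reverse).take k).sum ≤ (((t.sort (· ≤ ·)).reverse).take k).sum

/-- `T` is a `(σ,ρ)`-tabloid: the first component assigns to each element of `[n]` a block
(`Sum.inl i` is the block of the `i+1`-st largest part of `σ`, `Sum.inr j` that of `ρ`),
blocks have the prescribed sizes, and the colouring (second component)
is normalised to `1` on the `ρ`-blocks. -/
def IsTabloid (G : Type*) [CommGroup G] (n : ℕ) (σ ρ : Multiset ℕ)
    (T : (Fin n → ℕ ⊕ ℕ) × (Fin n → G)) : Prop :=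
  (∀ i, Nat.card {a : Fin n // T.1 a = Sum.inl i} = dparts σ i) ∧
  (∀ j, Nat.card {a : Fin n // T.1 a = Sum.inr j} = dparts ρ j) ∧
  (∀ a j, T.1 a = Sum.inr j → T.2 a = 1)

/-- The action of the wreath product on (raw) tabloids. -/
def tabAct {G : Type*} [CommGroup G] {n : ℕ} (w : Wr G n)
    (T : (Fin n → ℕ ⊕ ℕ) × (Fin n → G)) : (Fin n → ℕ ⊕ ℕ) × (Fin n → G) :=
  ⟨fun a => T.1 (w.right⁻¹ a),
   fun a => match T.1 (w.right⁻¹ a) with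
     | Sum.inl _ => T.2 (w.right⁻¹ a) * w.left a
     | Sum.inr _ => 1⟩

/-- A subset `Y` of `W` is transitive on `S ⊆ Ω` (w.r.t. an action `act`): there is a
constant `c > 0` such that any `a ∈ S` is mapped to any `b ∈ S` by exactly `c` elements of `Y`. -/
def IsTransitiveOn {W Ω : Type*} (act : W → Ω → Ω) (S : Set Ω) (Y : Set W) : Prop :=
  ∃ c : ℕ, 0 < c ∧ ∀ a ∈ S, ∀ b ∈ S, Nat.card {y : W // y ∈ Y ∧ act y a = b} = c

/-- `Y ⊆ G ≀ Sₙ` is `(σ,ρ)`-transitive. -/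
def DPTransitive (G : Type*) [CommGroup G] (n : ℕ) (σ ρ : Multiset ℕ)
    (Y : Set (Wr G n)) : Prop :=
  IsTransitiveOn tabAct {T | IsTabloid G n σ ρ T} Y

/-- `(σ,ρ) ≽_G (τ,π)` : every `(σ,ρ)`-transitive subset of `G ≀ Sₙ` is `(τ,π)`-transitive. -/
def DPDom (G : Type*) [CommGroup G] (n : ℕ) (σ ρ τ π : Multiset ℕ) : Prop :=
  ∀ Y : Set (Wr G n), DPTransitive G n σ ρ Y → DPTransitive G n τ π Y

/-- The partition obtained by adding `k` to the `r`-th largest part (1-indexed). -/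
def addPart (s : Multiset ℕ) (r k : ℕ) : Multiset ℕ :=
  s.erase (dparts s (r - 1)) + {dparts s (r - 1) + k}

/-- `θ(w)`: the number of fixed points of `w` on `C_r × [n]`, divided by `r`. -/
noncomputable def theta {r n : ℕ} (w : Wr (Multiplicative (ZMod r)) n) : ℕ :=
  Nat.card {p : Multiplicative (ZMod r) × Fin n // wAct w p = p} / r

/-- The Charlier polynomial `C_k^{(a)}(x) = ∑_{j=0}^k (-1)^{k-j} binom(k,j) a^{-j} (x)_j`. -/
noncomputable def charlier (a : ℝ) (k : ℕ) (x : ℝ) : ℝ :=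
  ∑ j ∈ Finset.range (k + 1),
    (-1 : ℝ) ^ (k - j) * (k.choose j : ℝ) * a⁻¹ ^ j * ∏ m ∈ Finset.range j, (x - m)

/-- `Y` is a `t`-design in `C_r ≀ Sₙ`: it is transitive on `t`-tuples of elements of
`C_r × [n]` with pairwise distinct second coordinates. -/
def IsTDesign (r n t : ℕ) (Y : Set (Wr (Multiplicative (ZMod r)) n)) : Prop :=
  IsTransitiveOn (fun w v => fun s => wAct w (v s))
    {v : Fin t → Multiplicative (ZMod r) × Fin n | Function.Injective fun s => (v s).2} Y

/-- `Y` is a `d`-code in `C_r ≀ Sₙ` : `θ(x⁻¹y) ≤ n - d` for all distinct `x, y ∈ Y`. -/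
def IsDCode (r n d : ℕ) (Y : Set (Wr (Multiplicative (ZMod r)) n)) : Prop :=
  ∀ x ∈ Y, ∀ y ∈ Y, x ≠ y → (theta (x⁻¹ * y) : ℤ) ≤ (n : ℤ) - d



section Lemmas
variable {G : Type*} [CommGroup G] {n : ℕ}

instance [Finite G] : Finite (Wr G n) :=
  Finite.of_injective (fun w => (w.left, w.right))
    (fun _ _ h => SemidirectProduct.ext (congrArg Prod.fst h) (congrArg Prod.snd h))

lemma permMulAut_apply (π : Equiv.Perm (Fin n)) (f : Fin n → G) (a : Fin n) :
    permMulAut G n π f a = f (π⁻¹ a) := rfl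

lemma wAct_one (p : G × Fin n) : wAct (1 : Wr G n) p = p := by
  simp [wAct, SemidirectProduct.one_left, SemidirectProduct.one_right]

lemma wAct_mul (u v : Wr G n) (p : G × Fin n) :
    wAct (u * v) p = wAct u (wAct v p) := by
  simp only [wAct, SemidirectProduct.mul_left, SemidirectProduct.mul_right,
    Equiv.Perm.mul_apply, Pi.mul_apply, permMulAut_apply]
  ext
  · simp [mul_comm, mul_assoc, mul_left_comm]
  · rfl

lemma wAct_fixed_iff (w : Wr G n) (p : G × Fin n) :
    wAct w p = p ↔ w.right p.2 = p.2 ∧ w.left p.2 = 1 := by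
  constructor
  · intro h
    have h2 : w.right p.2 = p.2 := congrArg Prod.snd h
    have h1 : p.1 * w.left (w.right p.2) = p.1 := congrArg Prod.fst h
    rw [h2] at h1
    refine ⟨h2, ?_⟩
    have := mul_left_cancel (a := p.1) (b := w.left p.2) (c := 1) (by rw [mul_one]; exact h1)
    exact this
  · rintro ⟨h2, h1⟩
    unfold wAct
    rw [h2, h1, mul_one]

lemma wAct_eq_iff (x y : Wr G n) (p : G × Fin n) :
    wAct x p = wAct y p ↔ wAct (x⁻¹ * y) p = p := by
  constructor
  · intro h
    rw [wAct_mul, ← h, ← wAct_mul, inv_mul_cancel, wAct_one]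
  · intro h
    have := congrArg (wAct x) h
    rw [← wAct_mul, mul_inv_cancel_left] at this
    exact this.symm

end Lemmas

section Theta
variable {r n : ℕ}

lemma theta_eq (hr : 1 ≤ r) (w : Wr (Multiplicative (ZMod r)) n) :
    theta w = Nat.card {i : Fin n // w.right i = i ∧ w.left i = 1} := by
  unfold theta
  have he : {p : Multiplicative (ZMod r) × Fin n // wAct w p = p} ≃
      Multiplicative (ZMod r) × {i : Fin n // w.right i = i ∧ w.left i = 1} :=
    { toFun := fun p => (p.1.1, ⟨p.1.2, (wAct_fixed_iff w p.1).mp p.2⟩)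
      invFun := fun q => ⟨(q.1, q.2.1), (wAct_fixed_iff w (q.1, q.2.1)).mpr q.2.2⟩
      left_inv := fun p => by ext <;> rfl
      right_inv := fun q => by ext <;> rfl }
  rw [Nat.card_congr he, Nat.card_prod,
    Nat.card_congr (Multiplicative.ofAdd (α := ZMod r)).symm, Nat.card_zmod]
  exact Nat.mul_div_cancel_left _ hr

lemma theta_le (hr : 1 ≤ r) (w : Wr (Multiplicative (ZMod r)) n) : theta w ≤ n := by
  rw [theta_eq hr w]
  have := Nat.card_le_card_of_injective
    (fun i : {i : Fin n // w.right i = i ∧ w.left i = 1} => i.1) Subtype.val_injective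
  simpa using this

lemma theta_eq_n (hr : 1 ≤ r) (w : Wr (Multiplicative (ZMod r)) n)
    (h : theta w = n) : w = 1 := by
  rw [theta_eq hr w] at h
  classical
  rw [Nat.card_eq_fintype_card, Fintype.card_subtype] at h
  have hu : Finset.filter (fun i => w.right i = i ∧ w.left i = 1) Finset.univ = Finset.univ := by
    apply (Finset.card_eq_iff_eq_univ _).mp
    simp [h]
  have hall : ∀ i : Fin n, w.right i = i ∧ w.left i = 1 := by
    intro i
    have := Finset.mem_filter.mp (hu ▸ Finset.mem_univ i)
    exact this.2
  apply SemidirectProduct.ext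
  · funext i; exact (hall i).2
  · exact Equiv.ext fun i => (hall i).1

/-- if `k` distinct points are fixed then `theta ≥ k` -/
lemma theta_ge (hr : 1 ≤ r) (w : Wr (Multiplicative (ZMod r)) n) {k : ℕ}
    (a : Fin k → Multiplicative (ZMod r) × Fin n)
    (hinj : Function.Injective fun s => (a s).2)
    (hfix : ∀ s, wAct w (a s) = a s) : k ≤ theta w := by
  rw [theta_eq hr w]
  have := Nat.card_le_card_of_injective
    (fun s : Fin k => (⟨(a s).2, (wAct_fixed_iff w (a s)).mp (hfix s)⟩ :
      {i : Fin n // w.right i = i ∧ w.left i = 1}))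
    (fun s s' h => hinj (congrArg Subtype.val h))
  simpa using this

end Theta

section Count
variable {r n : ℕ}

abbrev Tup (r n t : ℕ) : Set (Fin t → Multiplicative (ZMod r) × Fin n) :=
  {v | Function.Injective fun s => (v s).2}

lemma card_tup (hr : 1 ≤ r) (t : ℕ) :
    Nat.card (Tup r n t) = r ^ t * n.descFactorial t := by
  haveI : NeZero r := ⟨by omega⟩
  have he : ↥(Tup r n t) ≃ (Fin t → Multiplicative (ZMod r)) × (Fin t ↪ Fin n) :=
    { toFun := fun v => (fun s => (v.1 s).1, ⟨fun s => (v.1 s).2, v.2⟩)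
      invFun := fun q => ⟨fun s => (q.1 s, q.2 s), fun s s' h => q.2.injective h⟩
      left_inv := fun v => by ext s <;> rfl
      right_inv := fun q => by ext s <;> rfl }
  rw [Nat.card_congr he, Nat.card_prod, Nat.card_eq_fintype_card (α := Fin t ↪ Fin n),
    Fintype.card_embedding_eq]
  congr 2
  · rw [Nat.card_fun, Nat.card_congr (Multiplicative.ofAdd (α := ZMod r)).symm,
      Nat.card_zmod, Nat.card_eq_fintype_card, Fintype.card_fin]
  · simp
  · simp

lemma tup_act {t : ℕ} (y : Wr (Multiplicative (ZMod r)) n)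
    (a : Fin t → Multiplicative (ZMod r) × Fin n)
    (ha : a ∈ Tup r n t) : (fun s => wAct y (a s)) ∈ Tup r n t := by
  intro s s' h
  simp only [wAct] at h
  exact ha (y.right.injective h)

lemma tup_nonempty {t : ℕ} (h : t ≤ n) : (Tup r n t).Nonempty := by
  refine ⟨fun s => (1, Fin.castLE h s), fun s s' hss => ?_⟩
  simpa using Fin.castLE_injective h hss

lemma design_count (hr : 1 ≤ r) {t : ℕ} (htn : t ≤ n)
    {Y : Set (Wr (Multiplicative (ZMod r)) n)} {c : ℕ}
    (h : ∀ a ∈ Tup r n t, ∀ b ∈ Tup r n t,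
      Nat.card {y : Wr (Multiplicative (ZMod r)) n // y ∈ Y ∧ (fun s => wAct y (a s)) = b} = c) :
    Nat.card Y = c * (r ^ t * n.descFactorial t) := by
  classical
  haveI : NeZero r := ⟨by omega⟩
  obtain ⟨a, ha⟩ := tup_nonempty (r := r) (n := n) htn
  set f : ↥Y → ↥(Tup r n t) := fun y => ⟨fun s => wAct y.1 (a s), tup_act y.1 a ha⟩ with hf
  have he : (Σ b : ↥(Tup r n t), {y : ↥Y // f y = b}) ≃ ↥Y := Equiv.sigmaFiberEquiv f
  have hfib : ∀ b : ↥(Tup r n t), {y : ↥Y // f y = b} ≃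
      {y : Wr (Multiplicative (ZMod r)) n // y ∈ Y ∧ (fun s => wAct y (a s)) = b.1} :=
    fun b =>
    { toFun := fun u => ⟨u.1.1, u.1.2, congrArg Subtype.val u.2⟩
      invFun := fun v => ⟨⟨v.1, v.2.1⟩, Subtype.ext v.2.2⟩
      left_inv := fun u => rfl
      right_inv := fun v => rfl }
  haveI : Fintype (Wr (Multiplicative (ZMod r)) n) := Fintype.ofFinite _
  have key2 : ∀ b : ↥(Tup r n t), Fintype.card {y : ↥Y // f y = b} = c := fun b => by
    rw [← Nat.card_eq_fintype_card, Nat.card_congr (hfib b)]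
    exact h a ha b.1 b.2
  rw [← Nat.card_congr he, Nat.card_eq_fintype_card, Fintype.card_sigma,
    Finset.sum_congr rfl (fun b _ => key2 b), Finset.sum_const, smul_eq_mul,
    Finset.card_univ, ← Nat.card_eq_fintype_card, card_tup hr t, mul_comm]

end Count

section Code
variable {r n : ℕ}

lemma code_inj (hr : 1 ≤ r) {d : ℕ} {Y : Set (Wr (Multiplicative (ZMod r)) n)}
    (hd : IsDCode r n d Y) (hdn : d ≤ n) {k : ℕ} (hk : k = n - d + 1)
    (a : Fin k → Multiplicative (ZMod r) × Fin n) (ha : a ∈ Tup r n k) :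
    Function.Injective (fun y : ↥Y =>
      (⟨fun s => wAct y.1 (a s), tup_act y.1 a ha⟩ : ↥(Tup r n k))) := by
  intro x y hxy
  by_contra hne
  have hxy' : ∀ s, wAct x.1 (a s) = wAct y.1 (a s) :=
    fun s => congrFun (congrArg Subtype.val hxy) s
  have hfix : ∀ s, wAct ((x.1)⁻¹ * y.1) (a s) = a s :=
    fun s => (wAct_eq_iff x.1 y.1 (a s)).mp (hxy' s)
  have hθ : k ≤ theta ((x.1)⁻¹ * y.1) := theta_ge hr _ a ha hfix
  have hcode := hd x.1 x.2 y.1 y.2 (fun hh => hne (Subtype.ext hh))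
  subst hk
  have h2 : ((n - d + 1 : ℕ) : ℤ) ≤ (n : ℤ) - d := le_trans (by exact_mod_cast hθ) hcode
  rw [Nat.cast_add, Nat.cast_sub hdn, Nat.cast_one] at h2
  omega

lemma code_count (hr : 1 ≤ r) {d : ℕ} {Y : Set (Wr (Multiplicative (ZMod r)) n)}
    (hd : IsDCode r n d Y) (hdn : d ≤ n) (hd1 : 1 ≤ d) :
    Nat.card Y ≤ r ^ (n - d + 1) * n.descFactorial (n - d + 1) := by
  haveI : NeZero r := ⟨by omega⟩
  obtain ⟨a, ha⟩ := tup_nonempty (r := r) (n := n) (t := n - d + 1) (by omega)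
  have := Nat.card_le_card_of_injective _ (code_inj hr hd hdn rfl a ha)
  rwa [card_tup hr] at this

lemma code_eq_design (hr : 1 ≤ r) {d : ℕ} {Y : Set (Wr (Multiplicative (ZMod r)) n)}
    (hd : IsDCode r n d Y) (hdn : d ≤ n) (hd1 : 1 ≤ d) {k : ℕ} (hk : k = n - d + 1)
    (hcard : Nat.card Y = r ^ k * n.descFactorial k) :
    ∀ a ∈ Tup r n k, ∀ b ∈ Tup r n k,
      Nat.card {y : Wr (Multiplicative (ZMod r)) n // y ∈ Y ∧
        (fun s => wAct y (a s)) = b} = 1 := by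
  haveI : NeZero r := ⟨by omega⟩
  intro a ha b hb
  have hinj : Function.Injective (fun y : ↥Y =>
      (⟨fun s => wAct y.1 (a s), tup_act y.1 a ha⟩ : ↥(Tup r n k))) :=
    code_inj hr hd hdn hk a ha
  have hbij : Function.Bijective (fun y : ↥Y =>
      (⟨fun s => wAct y.1 (a s), tup_act y.1 a ha⟩ : ↥(Tup r n k))) := by
    rw [Nat.bijective_iff_injective_and_card]
    exact ⟨hinj, by rw [card_tup hr, ← hcard]⟩
  have hfib : {y : Wr (Multiplicative (ZMod r)) n // y ∈ Y ∧ (fun s => wAct y (a s)) = b} ≃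
      {u : ↥Y // (fun y : ↥Y =>
        (⟨fun s => wAct y.1 (a s), tup_act y.1 a ha⟩ : ↥(Tup r n k))) u = ⟨b, hb⟩} :=
    { toFun := fun v => ⟨⟨v.1, v.2.1⟩, Subtype.ext v.2.2⟩
      invFun := fun u => ⟨u.1.1, u.1.2, congrArg Subtype.val u.2⟩
      left_inv := fun v => rfl
      right_inv := fun u => rfl }
  rw [Nat.card_congr hfib, Nat.card_eq_one_iff_unique]
  constructor
  · exact ⟨fun u v => Subtype.ext (hinj (u.2.trans v.2.symm))⟩
  · obtain ⟨u, hu⟩ := hbij.2 ⟨b, hb⟩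
    exact ⟨⟨u, hu⟩⟩

end Code

section Mono
variable {r n : ℕ}

lemma snoc_inj {α : Type*} {k : ℕ} {f : Fin k → α} (hf : Function.Injective f) {x : α}
    (hx : ∀ s, f s ≠ x) : Function.Injective (Fin.snoc f x) := by
  intro s s' h
  induction s using Fin.lastCases with
  | last =>
    induction s' using Fin.lastCases with
    | last => rfl
    | cast i => rw [Fin.snoc_last, Fin.snoc_castSucc] at h; exact absurd h.symm (hx i)
  | cast i =>
    induction s' using Fin.lastCases with
    | last => rw [Fin.snoc_last, Fin.snoc_castSucc] at h; exact absurd h (hx i)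
    | cast j => rw [Fin.snoc_castSucc, Fin.snoc_castSucc] at h; exact congrArg _ (hf h)

lemma snoc_act_eq_iff {k : ℕ} (y : Wr (Multiplicative (ZMod r)) n)
    (a b : Fin k → Multiplicative (ZMod r) × Fin n)
    (z q : Multiplicative (ZMod r) × Fin n) :
    (fun s => wAct y ((Fin.snoc a z : Fin (k+1) → Multiplicative (ZMod r) × Fin n) s)) = Fin.snoc b q ↔
      ((fun s => wAct y (a s)) = b ∧ wAct y z = q) := by
  constructor
  · intro h
    refine ⟨funext fun s => ?_, ?_⟩
    · have := congrFun h s.castSucc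
      rwa [Fin.snoc_castSucc, Fin.snoc_castSucc] at this
    · have := congrFun h (Fin.last k)
      rwa [Fin.snoc_last, Fin.snoc_last] at this
  · rintro ⟨h1, h2⟩
    funext s
    induction s using Fin.lastCases with
    | last => rw [Fin.snoc_last, Fin.snoc_last]; exact h2
    | cast i => rw [Fin.snoc_castSucc, Fin.snoc_castSucc]; exact congrFun h1 i

lemma design_trivial {t : ℕ} (hnt : n < t) (Y : Set (Wr (Multiplicative (ZMod r)) n)) :
    IsTDesign r n t Y := by
  refine ⟨1, one_pos, fun a ha => absurd ?_ (by omega : ¬ t ≤ n)⟩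
  have := Fintype.card_le_of_injective _ ha
  simpa using this

lemma design_mono (hr : 1 ≤ r) {k : ℕ} (hkn : k + 1 ≤ n)
    {Y : Set (Wr (Multiplicative (ZMod r)) n)}
    (h : IsTDesign r n (k + 1) Y) : IsTDesign r n k Y := by
  classical
  haveI : NeZero r := ⟨by omega⟩
  obtain ⟨c, hc, hcc⟩ := h
  refine ⟨c * (r * (n - k)), Nat.mul_pos hc (Nat.mul_pos (by omega) (by omega)), ?_⟩
  intro a ha b hb
  have ha : Function.Injective fun s => (a s).2 := ha
  have hb : Function.Injective fun s => (b s).2 := hb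
  have hns : ¬ Function.Surjective (fun s : Fin k => (a s).2) := by
    intro hs
    have := Fintype.card_le_of_surjective _ hs
    simp only [Fintype.card_fin] at this
    omega
  obtain ⟨p, hp⟩ := not_forall.mp hns
  have hp' : ∀ s, (a s).2 ≠ p := fun s hs => hp ⟨s, hs⟩
  set a' : Fin (k+1) → Multiplicative (ZMod r) × Fin n :=
    Fin.snoc a ((1 : Multiplicative (ZMod r)), p) with ha'def
  have ha2 : (fun s => (a' s).2) = Fin.snoc (fun s => (a s).2) p :=
    Fin.comp_snoc Prod.snd a (1, p)
  have ha' : a' ∈ Tup r n (k+1) := by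
    show Function.Injective fun s => (a' s).2
    rw [ha2]
    exact snoc_inj ha hp'
  show Nat.card {y : Wr (Multiplicative (ZMod r)) n // y ∈ Y ∧
    (fun s => wAct y (a s)) = b} = c * (r * (n - k))
  set Q : Type _ := {q : Multiplicative (ZMod r) × Fin n // ∀ s : Fin k, (b s).2 ≠ q.2}
    with hQdef
  set base : Type _ := {y : Wr (Multiplicative (ZMod r)) n // y ∈ Y ∧
    (fun s => wAct y (a s)) = b} with hbasedef
  have hF2 : ∀ (y : base) (s : Fin k), (b s).2 ≠ (wAct y.1 (1, p)).2 := by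
    intro y s hq
    have hb2 : b s = wAct y.1 (a s) := (congrFun y.2.2 s).symm
    rw [hb2] at hq
    exact hp' s (y.1.right.injective hq)
  set F : base → Q := fun y => ⟨wAct y.1 (1, p), hF2 y⟩ with hFdef
  have hfib : ∀ q : Q, {u : base // F u = q} ≃
      {y : Wr (Multiplicative (ZMod r)) n // y ∈ Y ∧ (fun s => wAct y (a' s)) = Fin.snoc b q.1} :=
    fun q =>
    { toFun := fun u => ⟨u.1.1, u.1.2.1,
        (snoc_act_eq_iff u.1.1 a b (1, p) q.1).mpr ⟨u.1.2.2, congrArg Subtype.val u.2⟩⟩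
      invFun := fun v => ⟨⟨v.1, v.2.1, ((snoc_act_eq_iff v.1 a b (1, p) q.1).mp v.2.2).1⟩,
        Subtype.ext ((snoc_act_eq_iff v.1 a b (1, p) q.1).mp v.2.2).2⟩
      left_inv := fun u => rfl
      right_inv := fun v => rfl }
  have hsnb : ∀ q : Q, Fin.snoc b q.1 ∈ Tup r n (k+1) := by
    intro q
    show Function.Injective fun s => ((Fin.snoc b q.1 : Fin (k+1) → _) s).2
    have hb2 : (fun s => ((Fin.snoc b q.1 : Fin (k+1) → _) s).2)
        = Fin.snoc (fun s => (b s).2) q.1.2 := Fin.comp_snoc Prod.snd b q.1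
    rw [hb2]
    exact snoc_inj hb q.2
  have hfibcard : ∀ q : Q, Nat.card {u : base // F u = q} = c := by
    intro q
    rw [Nat.card_congr (hfib q)]
    exact hcc a' ha' (Fin.snoc b q.1) (hsnb q)
  haveI : Fintype (Wr (Multiplicative (ZMod r)) n) := Fintype.ofFinite _
  have hQcard : Nat.card Q = r * (n - k) := by
    have heq : Q ≃ Multiplicative (ZMod r) × {j : Fin n // ∀ s, (b s).2 ≠ j} :=
      { toFun := fun q => (q.1.1, ⟨q.1.2, q.2⟩)
        invFun := fun x => ⟨(x.1, x.2.1), x.2.2⟩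
        left_inv := fun q => rfl
        right_inv := fun x => rfl }
    rw [Nat.card_congr heq, Nat.card_prod,
      Nat.card_congr (Multiplicative.ofAdd (α := ZMod r)).symm, Nat.card_zmod]
    congr 1
    have he2 : {j : Fin n // ∀ s, (b s).2 ≠ j} ≃ {j : Fin n // ¬ ∃ s, (fun s => (b s).2) s = j} :=
      Equiv.subtypeEquivRight (fun j => by push_neg; rfl)
    have he3 : {j : Fin n // ∃ s, (fun s => (b s).2) s = j} ≃ Set.range (fun s => (b s).2) :=
      Equiv.refl _
    rw [Nat.card_congr he2, Nat.card_eq_fintype_card, Fintype.card_subtype_compl,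
      Fintype.card_fin, ← Nat.card_eq_fintype_card, Nat.card_congr he3,
      Nat.card_congr (Equiv.ofInjective _ hb).symm, Nat.card_eq_fintype_card, Fintype.card_fin]
  have he : (Σ q : Q, {u : base // F u = q}) ≃ base := Equiv.sigmaFiberEquiv F
  rw [← Nat.card_congr he, Nat.card_eq_fintype_card, Fintype.card_sigma]
  have hfc : ∀ q : Q, Fintype.card {u : base // F u = q} = c := fun q => by
    rw [← Nat.card_eq_fintype_card]
    exact hfibcard q
  simp only [hfc]
  rw [Finset.sum_const, smul_eq_mul, Finset.card_univ, ← Nat.card_eq_fintype_card, hQcard,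
    mul_comm]

end Mono

section Final
variable {r n : ℕ}

lemma design_le (hr : 1 ≤ r) {m : ℕ} {Y : Set (Wr (Multiplicative (ZMod r)) n)}
    (hm : m ≤ n) (h : IsTDesign r n m Y) : ∀ j ≤ m, IsTDesign r n j Y := by
  induction m with
  | zero => intro j hj; exact (Nat.le_zero.mp hj) ▸ h
  | succ m ih =>
    intro j hj
    rcases Nat.lt_or_ge j (m + 1) with hlt | hge
    · exact ih (by omega) (design_mono hr hm h) j (by omega)
    · have : j = m + 1 := by omega
      exact this ▸ h

lemma code_anti {d d' : ℕ} {Y : Set (Wr (Multiplicative (ZMod r)) n)}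
    (hdd : d' ≤ d) (h : IsDCode r n d Y) : IsDCode r n d' Y := by
  intro x hx y hy hne
  have := h x hx y hy hne
  omega

lemma f_mono (hr : 1 ≤ r) : ∀ b ≤ n, ∀ a ≤ b,
    r ^ a * n.descFactorial a ≤ r ^ b * n.descFactorial b := by
  intro b
  induction b with
  | zero => intro _ a ha; rw [Nat.le_zero.mp ha]
  | succ b ih =>
    intro hb a ha
    rcases Nat.lt_or_ge a (b + 1) with hlt | hge
    · refine le_trans (ih (by omega) a (by omega)) ?_
      rw [pow_succ, Nat.descFactorial_succ]
      calc r ^ b * n.descFactorial b = 1 * (r ^ b * n.descFactorial b) := (one_mul _).symm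
        _ ≤ (r * (n - b)) * (r ^ b * n.descFactorial b) :=
            Nat.mul_le_mul_right _ (by
              have h1 : 1 ≤ n - b := by omega
              calc (1:ℕ) = 1*1 := rfl
                _ ≤ r * (n-b) := Nat.mul_le_mul hr h1)
        _ = r ^ b * r * ((n - b) * n.descFactorial b) := by ring
    · have : a = b + 1 := by omega
      rw [this]

lemma f_pos (hr : 1 ≤ r) {a : ℕ} (ha : a ≤ n) : 0 < r ^ a * n.descFactorial a :=
  Nat.mul_pos (pow_pos (by omega) a) (Nat.pos_of_ne_zero (fun hz => by rw [Nat.descFactorial_eq_zero_iff_lt] at hz; omega))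

lemma f_strict (hr : 1 ≤ r) {a b : ℕ} (hab : a < b) (hb : b ≤ n - 1) (hn : 1 ≤ n) :
    r ^ a * n.descFactorial a < r ^ b * n.descFactorial b := by
  have h1 : r ^ a * n.descFactorial a ≤ r ^ (b-1) * n.descFactorial (b-1) :=
    f_mono hr (b-1) (by omega) a (by omega)
  have h2 : r ^ (b-1) * n.descFactorial (b-1) < r ^ b * n.descFactorial b := by
    have hb' : b = (b-1) + 1 := by omega
    rw [hb', pow_succ, Nat.descFactorial_succ]
    have hpos : 0 < r ^ (b-1) * n.descFactorial (b-1) := f_pos hr (by omega)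
    have h2' : 2 ≤ r * (n - (b-1)) := by
      have : 2 ≤ n - (b-1) := by omega
      calc 2 = 1 * 2 := rfl
        _ ≤ r * (n - (b-1)) := Nat.mul_le_mul hr this
    calc r ^ (b-1) * n.descFactorial (b-1) < 2 * (r ^ (b-1) * n.descFactorial (b-1)) := by omega
      _ ≤ (r * (n - (b-1))) * (r ^ (b-1) * n.descFactorial (b-1)) := Nat.mul_le_mul_right _ h2'
      _ = r ^ (b-1) * r * ((n - (b-1)) * n.descFactorial (b-1)) := by ring
  omega

lemma not_design_lt (hr : 1 ≤ r) {t : ℕ} {Y : Set (Wr (Multiplicative (ZMod r)) n)}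
    (ht' : ¬ IsTDesign r n (t + 1) Y) : t + 1 ≤ n := by
  by_contra hc
  exact ht' (design_trivial (by omega) Y)

end Final

section Final2
variable {r n : ℕ}

lemma tight_design_code (hr : 1 ≤ r) {t : ℕ} (htn : t ≤ n)
    {Y : Set (Wr (Multiplicative (ZMod r)) n)}
    (hcc : ∀ a ∈ Tup r n t, ∀ b ∈ Tup r n t,
      Nat.card {y : Wr (Multiplicative (ZMod r)) n // y ∈ Y ∧
        (fun s => wAct y (a s)) = b} = 1) :
    IsDCode r n (n - t + 1) Y := by
  classical
  haveI : NeZero r := ⟨by omega⟩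
  intro x hx y hy hne
  by_contra hcon
  push_neg at hcon
  have hθt : t ≤ theta (x⁻¹ * y) := by omega
  rw [theta_eq hr] at hθt
  obtain ⟨e⟩ : Nonempty (Fin t ↪ {i : Fin n // (x⁻¹*y).right i = i ∧ (x⁻¹*y).left i = 1}) := by
    haveI : Fintype {i : Fin n // (x⁻¹*y).right i = i ∧ (x⁻¹*y).left i = 1} :=
      Fintype.ofFinite _
    apply Function.Embedding.nonempty_of_card_le
    rw [Fintype.card_fin, ← Nat.card_eq_fintype_card]
    exact hθt
  set a : Fin t → Multiplicative (ZMod r) × Fin n := fun s => (1, (e s).1) with hadef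
  have ha : a ∈ Tup r n t := fun s s' h => e.injective (Subtype.ext h)
  have hfix : ∀ s, wAct (x⁻¹ * y) (a s) = a s :=
    fun s => (wAct_fixed_iff _ _).mpr ⟨(e s).2.1, (e s).2.2⟩
  have heq : ∀ s, wAct x (a s) = wAct y (a s) := fun s => (wAct_eq_iff _ _ _).mpr (hfix s)
  have hb : (fun s => wAct x (a s)) ∈ Tup r n t := tup_act x a ha
  have h1 := hcc a ha _ hb
  have hsub := (Nat.card_eq_one_iff_unique.mp h1).1
  have hxy : (⟨x, hx, rfl⟩ : {y' : Wr (Multiplicative (ZMod r)) n // y' ∈ Y ∧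
      (fun s => wAct y' (a s)) = fun s => wAct x (a s)}) =
      ⟨y, hy, funext fun s => (heq s).symm⟩ := Subsingleton.elim _ _
  exact hne (congrArg Subtype.val hxy)

end Final2
/-- **Bounds relating codes and designs in `C_r ≀ Sₙ`.**
Let `r, n ≥ 1`, let `Y` be a nonempty subset of `C_r ≀ Sₙ`, let `d` be the largest
integer such that `Y` is a `d`-code and `t` the largest integer such that `Y` is a
`t`-design.  Then `r^t·(n)_t ≤ |Y| ≤ r^{n-d+1}·(n)_{n-d+1}` (where `(n)_j = n!/(n-j)!`
is the falling factorial, so `n!/(d-1)! = (n)_{n-d+1}`).  Equality holds in the lower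
bound iff it holds in the upper bound, and this happens iff `d = n - t + 1`. -/
theorem code_design_bounds (r n : ℕ) (hr : 1 ≤ r) (hn : 1 ≤ n)
    (Y : Set (Wr (Multiplicative (ZMod r)) n)) (hY : Y.Nonempty)
    (d t : ℕ)
    (hd : IsDCode r n d Y) (hd' : ¬ IsDCode r n (d + 1) Y)
    (ht : IsTDesign r n t Y) (ht' : ¬ IsTDesign r n (t + 1) Y) :
    (r ^ t * n.descFactorial t ≤ Nat.card Y ∧
      Nat.card Y ≤ r ^ (n - d + 1) * n.descFactorial (n - d + 1)) ∧
    (r ^ t * n.descFactorial t = Nat.card Y ↔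
      Nat.card Y = r ^ (n - d + 1) * n.descFactorial (n - d + 1)) ∧
    (r ^ t * n.descFactorial t = Nat.card Y ↔ d = n - t + 1) := by

  obtain ⟨c, hc0, hcc⟩ := ht
  have htn1 : t + 1 ≤ n := not_design_lt hr ht'
  have htn : t ≤ n := by omega
  rw [IsDCode] at hd'
  push_neg at hd'
  obtain ⟨x, hx, y, hy, hne, hxy⟩ := hd'
  have hθ1 := hd x hx y hy hne
  have hθne : theta (x⁻¹ * y) ≠ n := fun hh => hne (inv_mul_eq_one.mp (theta_eq_n hr _ hh))
  have hθlen : theta (x⁻¹ * y) ≤ n := theta_le hr _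
  have hdn : d ≤ n := by omega
  have hd1 : 1 ≤ d := by omega
  have hYc : Nat.card Y = c * (r ^ t * n.descFactorial t) := design_count hr htn hcc
  have hL : 0 < r ^ t * n.descFactorial t := f_pos hr htn
  have lower : r ^ t * n.descFactorial t ≤ Nat.card Y := by
    rw [hYc]; exact Nat.le_mul_of_pos_left _ hc0
  have upper : Nat.card Y ≤ r ^ (n - d + 1) * n.descFactorial (n - d + 1) :=
    code_count hr hd hdn hd1
  have hdle : d ≤ n - t + 1 := by
    by_contra hcon2
    have hklt : n - d + 1 < t := by
      clear * - hcon2 htn hdn hd1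
      omega
    have := f_strict (r := r) (n := n) hr hklt (by omega) (by omega)
    exact absurd (le_trans lower upper) (not_le.mpr this)
  have P3 : r ^ t * n.descFactorial t = Nat.card Y → d = n - t + 1 := by
    intro hle
    rw [hYc] at hle
    have hc1 : c = 1 :=
      Nat.eq_of_mul_eq_mul_right hL (hle.symm.trans (one_mul _).symm)
    have hcc1 : ∀ a ∈ Tup r n t, ∀ b ∈ Tup r n t,
        Nat.card {y : Wr (Multiplicative (ZMod r)) n // y ∈ Y ∧
          (fun s => wAct y (a s)) = b} = 1 := fun a ha b hb => by
      rw [← hc1]; exact hcc a ha b hb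
    have hcode := tight_design_code hr htn hcc1
    have hθ2 := hcode x hx y hy hne
    omega
  have P5 : Nat.card Y = r ^ (n - d + 1) * n.descFactorial (n - d + 1) → d = n - t + 1 := by
    intro hue
    have hdes : IsTDesign r n (n - d + 1) Y :=
      ⟨1, one_pos, code_eq_design hr hd hdn hd1 rfl hue⟩
    have hkt : n - d + 1 ≤ t := by
      by_contra hcon3
      exact ht' (design_le hr (by omega) hdes (t + 1) (by omega))
    omega
  have hk_eq : d = n - t + 1 → n - d + 1 = t := by omega
  refine ⟨⟨lower, upper⟩, ?_, ?_⟩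
  · constructor
    · intro hle
      have hkeq := hk_eq (P3 hle)
      rw [hkeq]
      exact hle.symm
    · intro hue
      have hkeq := hk_eq (P5 hue)
      rw [hkeq] at hue
      exact hue.symm
  · refine ⟨P3, fun hdeq => ?_⟩
    have hkeq := hk_eq hdeq
    rw [hkeq] at upper
    exact le_antisymm lower upper
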